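/- Let I be an uncountable set, let W be the complex vector space with basis { w_i : i ∈ I } (realized as the space I →₀ ℂ of finitely supported functions), and let g be the quadratic form on W given by g(∑ α_i w_i) = ∑ α_i². Then for every countable subset X of the Clifford algebra Cl(W,g), the centralizer of X in Cl(W,g) is strictly larger than ℂ·1. -/

import Mathlib

theorem stmt_18 (I : Type*) [Uncountable I]
    (g : QuadraticForm ℂ (I →₀ ℂ))
    (hg : ∀ w : I →₀ ℂ, g w = ∑ i ∈ w.support, (w i) ^ 2)
    (X : Set (CliffordAlgebra g)) (hX : X.Countable) :
    ⊥ < Subalgebra.centralizer ℂ X := by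
  classical
  have hgd : ∀ v w : I →₀ ℂ, Disjoint v.support w.support → g.IsOrtho v w := by
    intro v w hd
    rw [QuadraticMap.isOrtho_def, hg, hg, hg, Finsupp.support_add_eq hd,
      Finset.sum_union hd]
    congr 1
    · refine Finset.sum_congr rfl fun k hk => ?_
      have hw : w k = 0 := Finsupp.notMem_support_iff.mp
        (Finset.disjoint_left.mp hd hk)
      simp [hw]
    · refine Finset.sum_congr rfl fun k hk => ?_
      have hv : v k = 0 := Finsupp.notMem_support_iff.mp
        (Finset.disjoint_right.mp hd hk)
      simp [hv]
  have hmono : ∀ S1 S2 : Set I, S1 ⊆ S2 →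
      {w : I →₀ ℂ | ∀ k, k ∉ S1 → w k = 0} ⊆ {w : I →₀ ℂ | ∀ k, k ∉ S2 → w k = 0} :=
    fun S1 S2 h w hw k hk => hw k fun hm => hk (h hm)
  have gen : ∀ x : CliffordAlgebra g, ∃ S : Set I, S.Countable ∧
      x ∈ Algebra.adjoin ℂ
        ((CliffordAlgebra.ι g) '' {w : I →₀ ℂ | ∀ k, k ∉ S → w k = 0}) := by
    intro x
    induction x using CliffordAlgebra.induction with
    | algebraMap r => exact ⟨∅, Set.countable_empty, Subalgebra.algebraMap_mem _ r⟩
    | ι w =>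
      refine ⟨↑w.support, (w.support : Set I).to_countable, Algebra.subset_adjoin ?_⟩
      exact ⟨w, fun k hk => Finsupp.notMem_support_iff.mp (by simpa using hk), rfl⟩
    | mul a b ha hb =>
      obtain ⟨Sa, hSa, hma⟩ := ha
      obtain ⟨Sb, hSb, hmb⟩ := hb
      refine ⟨Sa ∪ Sb, hSa.union hSb, mul_mem ?_ ?_⟩
      · exact Algebra.adjoin_mono (Set.image_mono (hmono _ _ Set.subset_union_left)) hma
      · exact Algebra.adjoin_mono (Set.image_mono (hmono _ _ Set.subset_union_right)) hmb
    | add a b ha hb =>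
      obtain ⟨Sa, hSa, hma⟩ := ha
      obtain ⟨Sb, hSb, hmb⟩ := hb
      refine ⟨Sa ∪ Sb, hSa.union hSb, add_mem ?_ ?_⟩
      · exact Algebra.adjoin_mono (Set.image_mono (hmono _ _ Set.subset_union_left)) hma
      · exact Algebra.adjoin_mono (Set.image_mono (hmono _ _ Set.subset_union_right)) hmb
  choose S hSc hSm using gen
  haveI := hX.to_subtype
  set T : Set I := ⋃ x : X, S (x : CliffordAlgebra g) with hT
  have hTc : T.Countable := Set.countable_iUnion fun x => hSc _
  have hcompl : Tᶜ.Infinite := by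
    intro hfin
    have : (Set.univ : Set I).Countable := by
      have := hTc.union hfin.countable
      simpa [Set.union_compl_self] using this
    exact not_countable (Set.countable_univ_iff.mp this)
  obtain ⟨i, hi, j, hj, hij⟩ := hcompl.nontrivial
  set ei : I →₀ ℂ := Finsupp.single i 1 with hei
  set ej : I →₀ ℂ := Finsupp.single j 1 with hej
  have hsei : ei.support = {i} := Finsupp.support_single_ne_zero i one_ne_zero
  have hsej : ej.support = {j} := Finsupp.support_single_ne_zero j one_ne_zero
  set z : CliffordAlgebra g :=
    CliffordAlgebra.ι g ei * CliffordAlgebra.ι g ej with hz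
  have hfresh : ∀ w : I →₀ ℂ, (∀ k, k ∉ T → w k = 0) → ∀ a ∈ ({i, j} : Set I),
      Disjoint (Finsupp.single a (1:ℂ)).support w.support := by
    intro w hw a ha
    rw [Finsupp.support_single_ne_zero a one_ne_zero, Finset.disjoint_singleton_left]
    intro hmem
    rcases ha with rfl | rfl
    · exact Finsupp.mem_support_iff.mp hmem (hw a hi)
    · exact Finsupp.mem_support_iff.mp hmem (hw a hj)
  have hzc : z ∈ Subalgebra.centralizer ℂ X := by
    rw [Subalgebra.mem_centralizer_iff]
    intro x hx
    have hxm : x ∈ Algebra.adjoin ℂ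
        ((CliffordAlgebra.ι g) '' {w : I →₀ ℂ | ∀ k, k ∉ T → w k = 0}) := by
      refine Algebra.adjoin_mono (Set.image_mono (hmono _ _ fun k h => ?_)) (hSm x)
      exact Set.mem_iUnion.mpr ⟨⟨x, hx⟩, h⟩
    have hcen : x ∈ Subalgebra.centralizer ℂ ({z} : Set (CliffordAlgebra g)) := by
      refine Algebra.adjoin_le ?_ hxm
      rintro _ ⟨w, hw, rfl⟩
      simp only [SetLike.mem_coe, Subalgebra.mem_centralizer_iff]
      rintro _ rfl
      have h1 : CliffordAlgebra.ι g ej * CliffordAlgebra.ι g w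
          = -(CliffordAlgebra.ι g w * CliffordAlgebra.ι g ej) :=
        CliffordAlgebra.ι_mul_ι_comm_of_isOrtho
          (hgd _ _ (hfresh w hw j (by simp)))
      have h2 : CliffordAlgebra.ι g ei * CliffordAlgebra.ι g w
          = -(CliffordAlgebra.ι g w * CliffordAlgebra.ι g ei) :=
        CliffordAlgebra.ι_mul_ι_comm_of_isOrtho
          (hgd _ _ (hfresh w hw i (by simp)))
      rw [hz, mul_assoc, h1, mul_neg, ← mul_assoc, h2, neg_mul, neg_neg, mul_assoc]
    rw [Subalgebra.mem_centralizer_iff] at hcen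
    exact (hcen z rfl).symm
  have hgei : g ei = 1 := by
    rw [hg, hsei, Finset.sum_singleton, hei, Finsupp.single_eq_same, one_pow]
  have hgej : g ej = 1 := by
    rw [hg, hsej, Finset.sum_singleton, hej, Finsupp.single_eq_same, one_pow]
  have hzb : z ∉ (⊥ : Subalgebra ℂ (CliffordAlgebra g)) := by
    intro hmem
    rw [Algebra.mem_bot] at hmem
    obtain ⟨r, hr⟩ := hmem
    have hcomm : CliffordAlgebra.ι g ei * z = z * CliffordAlgebra.ι g ei := by
      rw [← hr, Algebra.commutes]
    have horth : g.IsOrtho ei ej := by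
      refine hgd _ _ ?_
      rw [hsei, hsej]
      simpa using hij
    have hanti : CliffordAlgebra.ι g ej * CliffordAlgebra.ι g ei
        = -(CliffordAlgebra.ι g ei * CliffordAlgebra.ι g ej) :=
      CliffordAlgebra.ι_mul_ι_comm_of_isOrtho horth.symm
    have hleft : CliffordAlgebra.ι g ei * z = CliffordAlgebra.ι g ej := by
      rw [hz, ← mul_assoc, CliffordAlgebra.ι_sq_scalar, hgei, map_one, one_mul]
    have hright : z * CliffordAlgebra.ι g ei = -CliffordAlgebra.ι g ej := by
      rw [hz, mul_assoc, hanti, mul_neg, ← mul_assoc,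
        CliffordAlgebra.ι_sq_scalar, hgei, map_one, one_mul]
    have hneg : CliffordAlgebra.ι g ej = -CliffordAlgebra.ι g ej :=
      hleft.symm.trans (hcomm.trans hright)
    have h0 : CliffordAlgebra.ι g ej = 0 := by
      have h2 : (2 : ℂ) • CliffordAlgebra.ι g ej = 0 := by
        rw [two_smul]
        nth_rewrite 1 [hneg]
        exact neg_add_cancel _
      exact (smul_eq_zero.mp h2).resolve_left (by norm_num)
    have hone : (1 : CliffordAlgebra g) = 0 := by
      have hsq := CliffordAlgebra.ι_sq_scalar g ej
      rw [h0, mul_zero, hgej, map_one] at hsq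
      exact hsq.symm
    exact one_ne_zero hone
  exact SetLike.lt_iff_le_and_exists.mpr ⟨bot_le, z, hzc, hzb⟩
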